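/- Let ψ : ℝ × ℝ → ℝ be defined for a fixed α ∈ (0,1) by ψ(x,t) = α if x > t, ψ(x,t) = 0 if x = t, and ψ(x,t) = α − 1 if x < t. For n ≥ 2, ψ is a Tₙ-function (i.e., for every (x₁,…,xₙ) ∈ ℝⁿ the function t ↦ Σᵢ ψ(xᵢ,t) has a point of sign change) if and only if α ∉ {1/n, 2/n, …, (n−1)/n}. Moreover, when k/n < α < (k+1)/n for some k ∈ {0,…,n−1}, the point of sign change equals the (k+1)-st order statistic x*_{k+1} of x₁,…,xₙ. -/

import Mathlib

open Set Finset

private lemma sum_psi (α : ℝ) (ψ : ℝ → ℝ → ℝ)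
    (hψ : ∀ x t : ℝ, ψ x t = if t < x then α else if x = t then 0 else α - 1)
    (n : ℕ) (x : Fin n → ℝ) (t : ℝ) :
    ∑ i, ψ (x i) t =
      α * ((Finset.univ.filter (fun i => x i ≠ t)).card : ℝ)
        - ((Finset.univ.filter (fun i => x i < t)).card : ℝ) := by
  have h : ∀ i : Fin n, ψ (x i) t =
      α * (if x i ≠ t then (1:ℝ) else 0) - (if x i < t then (1:ℝ) else 0) := by
    intro i
    rw [hψ]
    rcases lt_trichotomy t (x i) with h | h | h
    · simp [h, h.ne', not_lt.2 h.le]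
    · simp [h.symm]
    · simp [h.ne, not_lt.2 h.le, h]
  rw [Finset.sum_congr rfl (fun i _ => h i), Finset.sum_sub_distrib, ← Finset.mul_sum,
    Finset.sum_boole, Finset.sum_boole]

private lemma card_lt_k (n k : ℕ) (hk : k < n) :
    ((Finset.univ : Finset (Fin n)).filter (fun j : Fin n => (j:ℕ) < k)).card = k := by
  have h : (Finset.univ : Finset (Fin n)).filter (fun j : Fin n => (j:ℕ) < k)
      = Finset.Iio (⟨k, hk⟩ : Fin n) := by
    ext j; simp [Fin.lt_def]
  rw [h, Fin.card_Iio]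

private lemma card_le_k (n k : ℕ) (hk : k < n) :
    ((Finset.univ : Finset (Fin n)).filter (fun j : Fin n => (j:ℕ) ≤ k)).card = k + 1 := by
  have h : (Finset.univ : Finset (Fin n)).filter (fun j : Fin n => (j:ℕ) ≤ k)
      = Finset.Iic (⟨k, hk⟩ : Fin n) := by
    ext j; simp [Fin.le_def]
  rw [h, Fin.card_Iic]

private lemma aux2 (α : ℝ) (hα : α ∈ Set.Ioo (0 : ℝ) 1)
    (ψ : ℝ → ℝ → ℝ)
    (hψ : ∀ x t : ℝ, ψ x t = if t < x then α else if x = t then 0 else α - 1)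
    (n : ℕ) (hn : 2 ≤ n)
    (k : ℕ) (hk : k < n) (h1 : (k : ℝ) / n < α) (h2 : α < ((k : ℝ) + 1) / n)
    (x : Fin n → ℝ) (σ : Equiv.Perm (Fin n)) (hmono : Monotone (x ∘ σ)) :
    (∀ t, t < x (σ ⟨k, hk⟩) → 0 < ∑ i, ψ (x i) t) ∧
    (∀ t, x (σ ⟨k, hk⟩) < t → ∑ i, ψ (x i) t < 0) := by
  have npos : (0:ℝ) < n := by positivity
  have hkn : (k:ℝ) < n * α := by
    rw [div_lt_iff₀ npos] at h1; linarith
  have hkn2 : n * α < (k:ℝ) + 1 := by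
    rw [lt_div_iff₀ npos] at h2; linarith
  constructor
  · intro t ht
    rw [sum_psi α ψ hψ n x t]
    set B := (Finset.univ.filter (fun i => x i ≠ t)).card with hB
    set C := (Finset.univ.filter (fun i => x i < t)).card with hC
    set E := (Finset.univ.filter (fun i => x i = t)).card with hE
    have hBE : B + E = n := by
      have := Finset.card_filter_add_card_filter_not
        (s := (Finset.univ : Finset (Fin n))) (p := fun i => x i ≠ t)
      simpa [hB, hE] using this
    -- C + E ≤ k
    have hle : C + E ≤ k := by
      have hun : (Finset.univ.filter (fun i => x i < t)) ∪
          (Finset.univ.filter (fun i => x i = t))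
          = Finset.univ.filter (fun i => x i ≤ t) := by
        rw [← Finset.filter_or]; apply Finset.filter_congr; intro i _
        simp [le_iff_lt_or_eq]
      have hdisj : Disjoint (Finset.univ.filter (fun i => x i < t))
          (Finset.univ.filter (fun i => x i = t)) := by
        rw [Finset.disjoint_left]; intro a ha hb
        simp only [Finset.mem_filter] at ha hb
        exact absurd hb.2 (ne_of_lt ha.2)
      have hcard : C + E = (Finset.univ.filter (fun i => x i ≤ t)).card := by
        rw [← hun, Finset.card_union_of_disjoint hdisj]
      rw [hcard, ← card_lt_k n k hk]
      apply Finset.card_le_card_of_injOn (fun i => σ.symm i)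
      · intro i hi
        simp only [Finset.mem_coe, Finset.mem_filter, Finset.mem_univ, true_and] at hi ⊢
        by_contra hcon
        push_neg at hcon
        have hge : (⟨k, hk⟩ : Fin n) ≤ σ.symm i := by
          rw [Fin.le_def]; simpa using hcon
        have := hmono hge
        simp only [Function.comp_apply, Equiv.apply_symm_apply] at this
        linarith [lt_of_le_of_lt hi (lt_of_lt_of_le ht this)]
      · intro a _ b _ hab
        exact σ.symm.injective hab
    -- B ≥ n - k > 0, i.e. n ≤ B + E & E ≤ k
    have hEk : E ≤ k := le_trans (Nat.le_add_left _ _) hle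
    have hBr : (B:ℝ) + E = n := by exact_mod_cast hBE
    have hler : (C:ℝ) + E ≤ k := by exact_mod_cast hle
    have hEkr : (E:ℝ) ≤ k := by exact_mod_cast hEk
    have hCr : (0:ℝ) ≤ C := Nat.cast_nonneg _
    have hEr : (0:ℝ) ≤ E := Nat.cast_nonneg _
    -- goal : 0 < α * B - C
    have hknr : (k:ℝ) < n := by exact_mod_cast hk
    nlinarith [mul_pos (sub_pos.2 hkn) (sub_pos.2 (lt_of_le_of_lt hEkr hknr)),
      mul_nonneg (sub_nonneg.2 hEkr) hEr]
  · intro t ht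
    rw [sum_psi α ψ hψ n x t]
    set B := (Finset.univ.filter (fun i => x i ≠ t)).card with hB
    set C := (Finset.univ.filter (fun i => x i < t)).card with hC
    have hCB : C ≤ B := by
      apply Finset.card_le_card
      intro i hi
      simp only [Finset.mem_filter, Finset.mem_univ, true_and] at hi ⊢
      exact ne_of_lt hi
    have hBn : B ≤ n := by
      simpa using Finset.card_le_card (Finset.filter_subset _ (Finset.univ : Finset (Fin n)))
    have hge : k + 1 ≤ C := by
      rw [← card_le_k n k hk]
      apply Finset.card_le_card_of_injOn (fun j => σ j)
      · intro j hj
        simp only [Finset.mem_coe, Finset.mem_filter, Finset.mem_univ, true_and] at hj ⊢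
        have hle : j ≤ (⟨k, hk⟩ : Fin n) := by rw [Fin.le_def]; simpa using hj
        have := hmono hle
        simp only [Function.comp_apply] at this
        exact lt_of_le_of_lt this ht
      · intro a _ b _ hab
        exact σ.injective hab
    have hCr : (k:ℝ) + 1 ≤ C := by exact_mod_cast hge
    have hCBr : (C:ℝ) ≤ B := by exact_mod_cast hCB
    have hBnr : (B:ℝ) ≤ n := by exact_mod_cast hBn
    nlinarith [mul_nonneg (sub_nonneg.2 hCBr) (sub_nonneg.2 hBnr),
      mul_pos (sub_pos.2 hkn2) (lt_of_lt_of_le (by linarith : (0:ℝ) < (k:ℝ)+1) hCr)]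

theorem stmt17 (α : ℝ) (hα : α ∈ Set.Ioo (0 : ℝ) 1)
    (ψ : ℝ → ℝ → ℝ)
    (hψ : ∀ x t : ℝ, ψ x t = if t < x then α else if x = t then 0 else α - 1)
    (n : ℕ) (hn : 2 ≤ n) :
    ((∀ x : Fin n → ℝ, ∃ ϑ : ℝ,
        (∀ t, t < ϑ → 0 < ∑ i, ψ (x i) t) ∧ (∀ t, ϑ < t → ∑ i, ψ (x i) t < 0)) ↔
      ∀ k : ℕ, 1 ≤ k → k ≤ n - 1 → α ≠ (k : ℝ) / n) ∧
    (∀ k : ℕ, ∀ hk : k < n, (k : ℝ) / n < α → α < ((k : ℝ) + 1) / n →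
      ∀ x : Fin n → ℝ, ∀ σ : Equiv.Perm (Fin n), Monotone (x ∘ σ) →
        (∀ t, t < x (σ ⟨k, hk⟩) → 0 < ∑ i, ψ (x i) t) ∧
        (∀ t, x (σ ⟨k, hk⟩) < t → ∑ i, ψ (x i) t < 0)) := by
  obtain ⟨hα0, hα1⟩ := hα
  have npos : (0:ℝ) < n := by positivity
  constructor
  · constructor
    · -- forward: T_n → α ≠ k/n
      intro hT k hk1 hk2 heq
      have hkn : k < n := by omega
      set x : Fin n → ℝ := fun i => if (i:ℕ) < k then 0 else 1 with hx
      have hsum : ∀ t : ℝ, 0 < t → t < 1 → ∑ i, ψ (x i) t = 0 := by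
        intro t ht0 ht1
        rw [sum_psi α ψ hψ n x t]
        have h1 : (Finset.univ.filter (fun i => x i ≠ t)) = Finset.univ := by
          apply Finset.filter_true_of_mem
          intro i _
          by_cases hi : (i:ℕ) < k
          · simp only [hx, if_pos hi]; intro hc; linarith [hc ▸ ht0]
          · simp only [hx, if_neg hi]; intro hc; linarith [hc ▸ ht1]
        have h2 : (Finset.univ.filter (fun i => x i < t))
            = (Finset.univ.filter (fun i : Fin n => (i:ℕ) < k)) := by
          apply Finset.filter_congr
          intro i _
          by_cases hi : (i:ℕ) < k
          · simp only [hx, if_pos hi]; exact iff_of_true ht0 hi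
          · simp only [hx, if_neg hi]; exact iff_of_false (by linarith) hi
        rw [h1, h2, card_lt_k n k hkn, Finset.card_univ, Fintype.card_fin, heq]
        field_simp
        ring
      obtain ⟨ϑ, hpos, hneg⟩ := hT x
      by_cases hth : (1:ℝ)/2 < ϑ
      · have := hpos (1/2) hth
        rw [hsum (1/2) (by norm_num) (by norm_num)] at this
        exact lt_irrefl 0 this
      · have := hneg (3/4) (by push_neg at hth; linarith)
        rw [hsum (3/4) (by norm_num) (by norm_num)] at this
        exact lt_irrefl 0 this
    · -- backward
      intro h x
      set K := Nat.floor ((n:ℝ) * α) with hK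
      have hnna : (0:ℝ) ≤ (n:ℝ) * α := by positivity
      have hKle : (K:ℝ) ≤ (n:ℝ) * α := Nat.floor_le hnna
      have hKlt : (n:ℝ) * α < K + 1 := Nat.lt_floor_add_one _
      have hKn : K < n := by
        rw [hK, Nat.floor_lt hnna]
        calc (n:ℝ) * α < n * 1 := by nlinarith
        _ = n := mul_one _
      have hne : (K:ℝ) ≠ (n:ℝ) * α := by
        intro heq
        rcases Nat.eq_zero_or_pos K with h0 | h0
        · rw [h0] at heq; simp at heq
          rcases heq with h' | h'
          · omega
          · linarith
        · exact h K h0 (by omega) (by field_simp; linarith [heq])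
      have hlt1 : (K:ℝ)/n < α := by
        rw [div_lt_iff₀ npos, mul_comm]
        exact lt_of_le_of_ne hKle hne
      have hlt2 : α < ((K:ℝ)+1)/n := by
        rw [lt_div_iff₀ npos, mul_comm]
        exact hKlt
      exact ⟨x (Tuple.sort x ⟨K, hKn⟩),
        aux2 α ⟨hα0, hα1⟩ ψ hψ n hn K hKn hlt1 hlt2 x (Tuple.sort x) (Tuple.monotone_sort x)⟩
  · intro k hk h1 h2 x σ hmono
    exact aux2 α ⟨hα0, hα1⟩ ψ hψ n hn k hk h1 h2 x σ hmono
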